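/- Let A be a positive semidefinite r×r real matrix, and let R₁,…,R_q be a partition of {1,…,r}. Define the q×q matrix B by B_{kl} = (|R_k||R_l|)^{-1/2} · Σ_{i∈R_k, j∈R_l} A_{ij}. Then the maximum eigenvalue of B is less than or equal to the maximum eigenvalue of A. -/

import Mathlib

open Matrix Pointwise

/-- Amit's lemma: if A is positive semidefinite and B is the matrix of normalised
block sums of A over a partition R₁,…,R_q of the index set, then the maximum
eigenvalue of B is at most the maximum eigenvalue of A. -/
theorem maxEig_normalized_block_sums_le {r q : ℕ}
    (A : Matrix (Fin r) (Fin r) ℝ) (hA : A.PosSemidef)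
    (R : Fin q → Finset (Fin r))
    (hne : ∀ k, (R k).Nonempty)
    (hdisj : ∀ k l, k ≠ l → Disjoint (R k) (R l))
    (hcover : ∀ i : Fin r, ∃ k, i ∈ R k)
    (B : Matrix (Fin q) (Fin q) ℝ)
    (hB : ∀ k l, B k l =
      (Real.sqrt (((R k).card : ℝ) * ((R l).card : ℝ)))⁻¹ *
        ∑ i ∈ R k, ∑ j ∈ R l, A i j)
    (μA μB : ℝ)
    (hμA : IsGreatest (spectrum ℝ A) μA)
    (hμB : IsGreatest (spectrum ℝ B) μB) :
    μB ≤ μA := by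
  classical
  -- C := μA • 1 - A is PosSemidef
  have hC : (μA • (1 : Matrix (Fin r) (Fin r) ℝ) - A).PosSemidef := by
    have hherm : (μA • (1 : Matrix (Fin r) (Fin r) ℝ) - A).IsHermitian := by
      have h1 : Aᵀ = A := by
        rw [← conjTranspose_eq_transpose_of_trivial]; exact hA.1.eq
      simp [Matrix.IsHermitian, conjTranspose_sub, conjTranspose_smul, h1]
    apply hherm.posSemidef_iff_eigenvalues_nonneg.mpr
    intro i
    rw [Pi.zero_apply]
    have hmem := hherm.eigenvalues_mem_spectrum_real i
    have hmem' : hherm.eigenvalues i ∈ ({μA} : Set ℝ) - spectrum ℝ A := by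
      rw [spectrum.singleton_sub_eq]
      convert hmem using 2
      · rfl
      rw [Algebra.algebraMap_eq_smul_one]
    clear hmem
    obtain ⟨x, hx, y, hy, hxy⟩ := hmem'
    rw [Set.mem_singleton_iff] at hx
    subst hx
    have h2 := hμA.2 hy
    simp only at hxy
    rw [← hxy]
    linarith
  -- eigenvector of B
  obtain ⟨v, hv⟩ := (Module.End.hasEigenvalue_iff_mem_spectrum.mpr (by
      have h := hμB.1
      rwa [← AlgEquiv.spectrum_eq (Matrix.toLinAlgEquiv (Pi.basisFun ℝ (Fin q))) B] at h
      )).exists_hasEigenvector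
  have hvne : v ≠ 0 := hv.right
  have hvB : B *ᵥ v = μB • v := by
    have h := hv.apply_eq_smul
    rw [Matrix.toLinAlgEquiv_apply] at h
    have hr : ⇑((Pi.basisFun ℝ (Fin q)).repr v) = v := funext fun i => Pi.basisFun_repr (x := v) (i := i)
    funext j
    simpa [Pi.basisFun_repr, Pi.single_apply, mul_ite, mul_one, mul_zero, Finset.sum_ite_eq, Finset.sum_ite_eq', hr] using congrFun h j
  -- the lifted vector w
  set c : Fin q → ℝ := fun k => (Real.sqrt ((R k).card : ℝ))⁻¹ with hc
  set w : Fin r → ℝ := fun i => ∑ k, if i ∈ R k then c k * v k else 0 with hwdef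
  have hw : ∀ k : Fin q, ∀ i ∈ R k, w i = c k * v k := by
    intro k i hi
    rw [hwdef]
    simp only
    rw [Finset.sum_eq_single k]
    · simp [hi]
    · intro l _ hlk
      have : i ∉ R l := fun h => Finset.disjoint_left.mp (hdisj l k hlk) h hi
      simp [this]
    · simp
  -- splitting sums over the partition
  have hsplit : ∀ f : Fin r → ℝ, ∑ i, f i = ∑ k, ∑ i ∈ R k, f i := by
    intro f
    have huniv : (Finset.univ : Finset (Fin r)) = Finset.univ.biUnion R := by
      ext i; simpa using hcover i
    rw [huniv, Finset.sum_biUnion]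
    intro k _ l _ hkl
    exact hdisj k l hkl
  have hcard : ∀ k, c k * c k * ((R k).card : ℝ) = 1 := by
    intro k
    have h0 : (0:ℝ) < ((R k).card : ℝ) := by
      exact_mod_cast Finset.card_pos.mpr (hne k)
    rw [hc]
    simp only
    rw [← mul_inv, Real.mul_self_sqrt h0.le]
    field_simp
  -- (1) norms agree
  have hnorm : w ⬝ᵥ w = v ⬝ᵥ v := by
    rw [dotProduct, dotProduct, hsplit fun i => w i * w i]
    refine Finset.sum_congr rfl fun k _ => ?_
    calc ∑ i ∈ R k, w i * w i = ∑ i ∈ R k, c k * v k * (c k * v k) :=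
          Finset.sum_congr rfl fun i hi => by rw [hw k i hi]
      _ = ((R k).card : ℝ) * (c k * v k * (c k * v k)) := by
          rw [Finset.sum_const, nsmul_eq_mul]
      _ = c k * c k * ((R k).card : ℝ) * (v k * v k) := by ring
      _ = v k * v k := by rw [hcard k]; ring
  -- (2) quadratic forms agree
  have hquad : w ⬝ᵥ (A *ᵥ w) = v ⬝ᵥ (B *ᵥ v) := by
    have lhs : w ⬝ᵥ (A *ᵥ w) = ∑ k, ∑ i ∈ R k, ∑ l, ∑ j ∈ R l, w i * (A i j * w j) := by
      rw [dotProduct, hsplit fun i => w i * (A *ᵥ w) i]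
      refine Finset.sum_congr rfl fun k _ => Finset.sum_congr rfl fun i _ => ?_
      simp only [Matrix.mulVec, dotProduct]
      rw [hsplit fun j => A i j * w j, Finset.mul_sum]
      exact Finset.sum_congr rfl fun l _ => (Finset.mul_sum _ _ _)
    rw [lhs, dotProduct]
    refine Finset.sum_congr rfl fun k _ => ?_
    simp only [Matrix.mulVec, dotProduct]
    rw [Finset.mul_sum, Finset.sum_comm]
    refine Finset.sum_congr rfl fun l _ => ?_
    rw [hB k l]
    have hsq : (Real.sqrt (((R k).card : ℝ) * ((R l).card : ℝ)))⁻¹ = c k * c l := by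
      rw [hc]
      simp only
      rw [Real.sqrt_mul (by positivity), mul_inv]
    rw [hsq]
    calc ∑ i ∈ R k, ∑ j ∈ R l, w i * (A i j * w j)
        = ∑ i ∈ R k, ∑ j ∈ R l, (c k * v k) * (c l * v l) * A i j := by
          refine Finset.sum_congr rfl fun i hi => Finset.sum_congr rfl fun j hj => ?_
          rw [hw k i hi, hw l j hj]; ring
      _ = (c k * v k) * (c l * v l) * ∑ i ∈ R k, ∑ j ∈ R l, A i j := by
          rw [Finset.mul_sum]
          exact Finset.sum_congr rfl fun i _ => (Finset.mul_sum _ _ _).symm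
      _ = v k * (c k * c l * (∑ i ∈ R k, ∑ j ∈ R l, A i j) * v l) := by ring
  -- positivity of ‖v‖²
  have hvpos : 0 < v ⬝ᵥ v := by
    rcases lt_or_eq_of_le (Finset.sum_nonneg fun i _ => mul_self_nonneg (v i) :
        (0:ℝ) ≤ v ⬝ᵥ v) with h | h
    · exact h
    · exfalso
      apply hvne
      funext i
      have := Finset.sum_eq_zero_iff_of_nonneg
        (fun j (_ : j ∈ Finset.univ) => mul_self_nonneg (v j)) |>.mp h.symm i (Finset.mem_univ i)
      exact mul_self_eq_zero.mp this
  -- put it together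
  have hkey := hC.dotProduct_mulVec_nonneg w
  rw [sub_mulVec, smul_mulVec, one_mulVec, star_trivial,
    dotProduct_sub, dotProduct_smul, hnorm, hquad, hvB, dotProduct_smul] at hkey
  have : μB * (v ⬝ᵥ v) ≤ μA * (v ⬝ᵥ v) := by
    simpa [smul_eq_mul] using sub_nonneg.mp hkey
  exact le_of_mul_le_mul_right this hvpos
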